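/- Assume p < 1 − β^α, and let ĉ satisfy 0 < ĉ ≤ (1−p)(1−β^α)/((1−p)+(1−β^α)). Set Z₁* = ((1−p−ĉ)·β^α/(1−p) + ĉ)^{−1/α} and Z₂* = ((1−p−ĉ)·β^α/(1−p))^{−1/α}. Then 1 ≤ Z₁* < Z₂*, (Z₁*)^{−α} − (Z₂*)^{−α} = ĉ, mm([Z₁*,Z₂*]) = (1−p−ĉ)(1−β^α) + p·ĉ, and for every interval [Z₁,Z₂] with 1 ≤ Z₁ < Z₂ and Z₁^{−α} − Z₂^{−α} ≤ ĉ one has mm([Z₁,Z₂]) ≥ (1−p−ĉ)(1−β^α) + p·ĉ. -/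

import Mathlib

open Set
open Filter

/-- Tail function `F̄(t) = min(1, t^{-α})`. -/
noncomputable def Fbar (α t : ℝ) : ℝ := min 1 (t ^ (-α))

/-- Biased school assignment of a G₂ student of true potential `z`. -/
noncomputable def muHat2 (α β p z : ℝ) : ℝ :=
  (1 - p) * Fbar α (β * z) + p * z ^ (-α)

/-- School attended by a G₂ student of true potential `z` after the G₂ students
with true potentials in `[Z₁, Z₂]` have been debiased. -/
noncomputable def muT (α β p Z₁ Z₂ z : ℝ) : ℝ :=
  if z < Z₁ then (1 - p) * Fbar α (β * z) + p * z ^ (-α)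
  else if z ≤ Z₂ then
    (1 - p) * z ^ (-α) + p * (z ^ (-α) - Z₂ ^ (-α)) + p * (max (z / β) Z₂) ^ (-α)
  else
    (1 - p) * Fbar α (β * z) + p * z ^ (-α)
      + p * max 0 ((max (β * z) Z₁) ^ (-α) - Z₂ ^ (-α))

/-- Maximum mistreatment of G₂ students after debiasing `[Z₁, Z₂]`. -/
noncomputable def mm (α β p Z₁ Z₂ : ℝ) : ℝ :=
  sSup ((fun z => muT α β p Z₁ Z₂ z - z ^ (-α)) '' Ici (1:ℝ))

lemma orm_rpow_anti {α x y : ℝ} (hα : 0 < α) (hx : 0 < x) (hxy : x ≤ y) :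
    y ^ (-α) ≤ x ^ (-α) :=
  Real.rpow_le_rpow_of_nonpos hx hxy (neg_nonpos.mpr hα.le)

lemma orm_rpow_inv_neg {α x : ℝ} (hα : 0 < α) (hx : 0 < x) :
    (x ^ (-1 / α)) ^ (-α) = x := by
  have h : (-1 / α) * (-α) = 1 := by field_simp
  rw [← Real.rpow_mul hx.le, h, Real.rpow_one]

lemma orm_alg_i {p B c A D E : ℝ} (hq : 0 < 1 - p) (hB0 : 0 < B) (hB1 : B < 1)
    (hs : 0 < 1 - B - p) (hm : A - D ≤ c) (hEB : E * B = D) :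
    (1 - p - c) * (1 - B) + p * c ≤
      max ((1 - p) * (1 - A)) ((1 - p) * E + p * D + p * (A - D) - D) := by
  by_contra hcon
  push_neg at hcon
  rw [max_lt_iff] at hcon
  obtain ⟨hL, hR⟩ := hcon
  have h1' : (1 - p) * B - (A - D) * B < (1 - p) * D := by
    nlinarith [mul_le_mul_of_nonneg_right hm hs.le]
  have hRB := mul_lt_mul_of_pos_right hR hB0
  have hEB2 : p * (E * B) = p * D := by rw [hEB]
  have h2'' : (1 - p) * D * (1 - B) < ((1 - p) * B - (A - D) * B) * (1 - B) := by
    nlinarith [mul_le_mul_of_nonneg_right hm (mul_pos hB0 hs).le]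
  nlinarith [mul_lt_mul_of_pos_right h1' (show (0:ℝ) < 1 - B by linarith)]

lemma orm_alg_ii {p B c A D E : ℝ} (hq : 0 < 1 - p) (hp0 : 0 < p) (hB0 : 0 < B)
    (hB1 : B < 1) (hm : A - D ≤ c)
    (hcb : c * ((1 - p) + (1 - B)) ≤ (1 - p) * (1 - B)) (hEB : E * B = D) :
    (1 - p - c) * (1 - B) + p * c ≤ max ((1 - p) * (1 - A)) (E - D) := by
  by_contra hcon
  push_neg at hcon
  rw [max_lt_iff] at hcon
  obtain ⟨hL, hR⟩ := hcon
  have hα3 : (1 - p) * B + c * (1 - B - p) - (1 - p) * c < (1 - p) * D := by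
    nlinarith [mul_le_mul_of_nonneg_left (show A ≤ c + D by linarith) hq.le]
  have hRB := mul_lt_mul_of_pos_right hR hB0
  have hα2 : D * (1 - B) < ((1 - p) * (1 - B) - c * (1 - B - p)) * B := by
    nlinarith [hRB, hEB]
  have hα3' := mul_lt_mul_of_pos_right hα3 (show (0:ℝ) < 1 - B by linarith)
  have hα2' := mul_lt_mul_of_pos_left hα2 hq
  have hbud := mul_le_mul_of_nonneg_left hcb (mul_nonneg hp0.le hB0.le)
  nlinarith [hα3', hα2', hbud]

lemma orm_bdd (α β p Z₁ Z₂ : ℝ) (hα : 0 < α) (hβ : 0 < β) (hZ1 : 1 ≤ Z₁) (hZ12 : Z₁ < Z₂)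
    (hp0 : 0 < p) (hp1 : p < 1) :
    BddAbove ((fun z => muT α β p Z₁ Z₂ z - z ^ (-α)) '' Ici (1:ℝ)) := by
  refine ⟨2, ?_⟩
  rintro x ⟨z, hz, rfl⟩
  have hz1 : (1:ℝ) ≤ z := hz
  have hz0 : (0:ℝ) < z := lt_of_lt_of_le one_pos hz1
  have hu0 : (0:ℝ) ≤ z ^ (-α) := Real.rpow_nonneg hz0.le _
  have hu1 : z ^ (-α) ≤ 1 := Real.rpow_le_one_of_one_le_of_nonpos hz1 (neg_nonpos.mpr hα.le)
  have hF : Fbar α (β * z) ≤ 1 := min_le_left _ _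
  have hF0 : 0 ≤ Fbar α (β * z) := le_min one_pos.le (Real.rpow_nonneg (by positivity) _)
  simp only [muT]
  have hZ20 : (0:ℝ) < Z₂ := by linarith
  split_ifs with h1 h2
  · nlinarith
  · have hM : (max (z / β) Z₂) ^ (-α) ≤ Z₂ ^ (-α) := orm_rpow_anti hα hZ20 (le_max_right _ _)
    have hb1 : Z₂ ^ (-α) ≤ 1 :=
      Real.rpow_le_one_of_one_le_of_nonpos (by linarith) (neg_nonpos.mpr hα.le)
    have hM0 : (0:ℝ) ≤ (max (z / β) Z₂) ^ (-α) := Real.rpow_nonneg (by positivity) _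
    nlinarith [mul_nonneg hp0.le (sub_nonneg.mpr hM)]
  · have hMx : (max (β * z) Z₁) ^ (-α) ≤ 1 :=
      Real.rpow_le_one_of_one_le_of_nonpos (le_trans hZ1 (le_max_right _ _))
        (neg_nonpos.mpr hα.le)
    have hb0 : (0:ℝ) ≤ Z₂ ^ (-α) := Real.rpow_nonneg hZ20.le _
    have hm1 : max 0 ((max (β * z) Z₁) ^ (-α) - Z₂ ^ (-α)) ≤ 1 :=
      max_le (by norm_num) (by linarith)
    nlinarith [mul_le_mul_of_nonneg_left hm1 hp0.le]

lemma orm_left_limit (α β p Z₁ Z₂ : ℝ) (hα : 0 < α) (hβ : 0 < β) (hZ : 1 < Z₁)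
    (hbdd : BddAbove ((fun z => muT α β p Z₁ Z₂ z - z ^ (-α)) '' Ici (1:ℝ))) :
    (1 - p) * Fbar α (β * Z₁) + p * Z₁ ^ (-α) - Z₁ ^ (-α)
      ≤ sSup ((fun z => muT α β p Z₁ Z₂ z - z ^ (-α)) '' Ici (1:ℝ)) := by
  have hZ0 : (0:ℝ) < Z₁ := by linarith
  have hF : ContinuousAt (fun z : ℝ => Fbar α (β * z)) Z₁ := by
    simp only [Fbar]
    exact continuousAt_const.min
      ((continuousAt_const.mul continuousAt_id).rpow_const (Or.inl (mul_ne_zero hβ.ne' hZ0.ne')))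
  have hr : ContinuousAt (fun z : ℝ => z ^ (-α)) Z₁ :=
    continuousAt_id.rpow_const (Or.inl hZ0.ne')
  have hcont : ContinuousAt
      (fun z : ℝ => (1 - p) * Fbar α (β * z) + p * z ^ (-α) - z ^ (-α)) Z₁ :=
    ((hF.const_mul _).add (hr.const_mul _)).sub hr
  have hT : Tendsto (fun z => muT α β p Z₁ Z₂ z - z ^ (-α)) (nhdsWithin Z₁ (Iio Z₁))
      (nhds ((1 - p) * Fbar α (β * Z₁) + p * Z₁ ^ (-α) - Z₁ ^ (-α))) := by
    refine Tendsto.congr' ?_ (hcont.continuousWithinAt (s := Iio Z₁)).tendsto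
    filter_upwards [self_mem_nhdsWithin] with z hz
    rw [muT, if_pos (show z < Z₁ from hz)]
  refine le_of_tendsto hT ?_
  filter_upwards [Ioo_mem_nhdsLT_of_mem (⟨hZ, le_refl Z₁⟩ : Z₁ ∈ Ioc 1 Z₁)] with z hz
  exact le_csSup hbdd ⟨z, hz.1.le, rfl⟩

lemma orm_right_limit (α β p Z₁ Z₂ : ℝ) (hα : 0 < α) (hβ : 0 < β)
    (hZ1 : 1 ≤ Z₁) (hZ12 : Z₁ < Z₂)
    (hbdd : BddAbove ((fun z => muT α β p Z₁ Z₂ z - z ^ (-α)) '' Ici (1:ℝ))) :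
    (1 - p) * Fbar α (β * Z₂) + p * Z₂ ^ (-α)
        + p * max 0 ((max (β * Z₂) Z₁) ^ (-α) - Z₂ ^ (-α)) - Z₂ ^ (-α)
      ≤ sSup ((fun z => muT α β p Z₁ Z₂ z - z ^ (-α)) '' Ici (1:ℝ)) := by
  have hZ0 : (0:ℝ) < Z₂ := by linarith
  have hF : ContinuousAt (fun z : ℝ => Fbar α (β * z)) Z₂ := by
    simp only [Fbar]
    exact continuousAt_const.min
      ((continuousAt_const.mul continuousAt_id).rpow_const (Or.inl (mul_ne_zero hβ.ne' hZ0.ne')))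
  have hr : ContinuousAt (fun z : ℝ => z ^ (-α)) Z₂ :=
    continuousAt_id.rpow_const (Or.inl hZ0.ne')
  have hmx : ContinuousAt (fun z : ℝ => (max (β * z) Z₁) ^ (-α)) Z₂ := by
    refine ContinuousAt.rpow_const ?_ (Or.inl ?_)
    · exact ((continuousAt_const.mul continuousAt_id).max continuousAt_const)
    · have h : (1:ℝ) ≤ max (β * Z₂) Z₁ := le_trans hZ1 (le_max_right _ _)
      positivity
  have hcont : ContinuousAt (fun z : ℝ => (1 - p) * Fbar α (β * z) + p * z ^ (-α)
      + p * max 0 ((max (β * z) Z₁) ^ (-α) - Z₂ ^ (-α)) - z ^ (-α)) Z₂ :=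
    (((hF.const_mul _).add (hr.const_mul _)).add
      (((continuousAt_const.max (hmx.sub continuousAt_const))).const_mul _)).sub hr
  have hT : Tendsto (fun z => muT α β p Z₁ Z₂ z - z ^ (-α)) (nhdsWithin Z₂ (Ioi Z₂))
      (nhds ((1 - p) * Fbar α (β * Z₂) + p * Z₂ ^ (-α)
        + p * max 0 ((max (β * Z₂) Z₁) ^ (-α) - Z₂ ^ (-α)) - Z₂ ^ (-α))) := by
    refine Tendsto.congr' ?_ (hcont.continuousWithinAt (s := Ioi Z₂)).tendsto
    filter_upwards [self_mem_nhdsWithin] with z hz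
    have hz2 : Z₂ < z := hz
    rw [muT, if_neg (not_lt.mpr (le_of_lt (hZ12.trans hz2))), if_neg (not_le.mpr hz2)]
  refine le_of_tendsto hT ?_
  filter_upwards [self_mem_nhdsWithin] with z hz
  have hz2 : Z₂ < z := hz
  exact le_csSup hbdd ⟨z, le_of_lt (lt_of_le_of_lt hZ1 (hZ12.trans hz2)), rfl⟩

set_option maxHeartbeats 1000000 in
/-- Optimal voucher interval minimizing the maximum mistreatment, small-budget
case `ĉ ≤ (1-p)(1-β^α)/((1-p)+(1-β^α))`. -/
theorem optimal_range_mm_small_budget (α β p c : ℝ) (hα : 0 < α)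
    (hβ : β ∈ Ioo (0:ℝ) 1) (hp : p ∈ Ioo (0:ℝ) 1)
    (hpβ : p < 1 - β ^ α) (hc0 : 0 < c)
    (hc : c ≤ (1 - p) * (1 - β ^ α) / ((1 - p) + (1 - β ^ α))) :
    1 ≤ ((1 - p - c) * β ^ α / (1 - p) + c) ^ (-1 / α) ∧
    ((1 - p - c) * β ^ α / (1 - p) + c) ^ (-1 / α)
      < ((1 - p - c) * β ^ α / (1 - p)) ^ (-1 / α) ∧
    (((1 - p - c) * β ^ α / (1 - p) + c) ^ (-1 / α)) ^ (-α)
      - (((1 - p - c) * β ^ α / (1 - p)) ^ (-1 / α)) ^ (-α) = c ∧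
    mm α β p (((1 - p - c) * β ^ α / (1 - p) + c) ^ (-1 / α))
        (((1 - p - c) * β ^ α / (1 - p)) ^ (-1 / α))
      = (1 - p - c) * (1 - β ^ α) + p * c ∧
    ∀ Z₁ Z₂ : ℝ, 1 ≤ Z₁ → Z₁ < Z₂ → Z₁ ^ (-α) - Z₂ ^ (-α) ≤ c →
      (1 - p - c) * (1 - β ^ α) + p * c ≤ mm α β p Z₁ Z₂ := by
  have hβ0 := hβ.1
  have hβ1 := hβ.2
  have hp0 := hp.1
  have hp1 := hp.2
  set B := β ^ α with hBdef
  have hB0 : 0 < B := Real.rpow_pos_of_pos hβ0 α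
  have hB1 : B < 1 := Real.rpow_lt_one hβ0.le hβ1 hα
  have hq : 0 < 1 - p := by linarith
  have hs : 0 < 1 - B - p := by linarith
  have hden : 0 < (1 - p) + (1 - B) := by linarith
  have hcb : c * ((1 - p) + (1 - B)) ≤ (1 - p) * (1 - B) := (le_div_iff₀ hden).mp hc
  have hcq : c < 1 - p := by
    by_contra hcon; push_neg at hcon
    nlinarith [mul_le_mul_of_nonneg_right hcon hden.le, mul_pos hq hq]
  have hcB : c < 1 - B := by
    by_contra hcon; push_neg at hcon
    nlinarith [mul_le_mul_of_nonneg_right hcon hden.le,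
      mul_pos (show (0:ℝ) < 1 - B by linarith) (show (0:ℝ) < 1 - B by linarith)]
  have hG0 : 0 < (1 - p - c) * (1 - B) + p * c := by
    nlinarith [mul_pos (show (0:ℝ) < 1 - p - c by linarith)
      (show (0:ℝ) < 1 - B by linarith), mul_pos hp0 hc0]
  have hαexp : -1 / α ≤ 0 := div_nonpos_of_nonpos_of_nonneg (by norm_num) hα.le
  -- the key lower bound for all feasible intervals
  have key : ∀ W₁ W₂ : ℝ, 1 ≤ W₁ → W₁ < W₂ → W₁ ^ (-α) - W₂ ^ (-α) ≤ c →
      (1 - p - c) * (1 - B) + p * c ≤ mm α β p W₁ W₂ := by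
    intro W₁ W₂ hW1 hW12 hWc
    have hW10 : (0:ℝ) < W₁ := lt_of_lt_of_le one_pos hW1
    have hW20 : (0:ℝ) < W₂ := hW10.trans hW12
    have hbdd := orm_bdd α β p W₁ W₂ hα hβ0 hW1 hW12 hp0 hp1
    have hA0 : 0 < W₁ ^ (-α) := Real.rpow_pos_of_pos hW10 _
    have hD0 : 0 < W₂ ^ (-α) := Real.rpow_pos_of_pos hW20 _
    have hDA : W₂ ^ (-α) < W₁ ^ (-α) :=
      Real.rpow_lt_rpow_of_neg hW10 hW12 (neg_lt_zero.mpr hα)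
    have hA1 : W₁ ^ (-α) ≤ 1 :=
      Real.rpow_le_one_of_one_le_of_nonpos hW1 (neg_nonpos.mpr hα.le)
    have hβinv1 : (1:ℝ) ≤ β⁻¹ := by
      have h := inv_anti₀ hβ0 hβ1.le; simpa using h
    have hβB : (β⁻¹:ℝ) ^ (-α) = B := by
      rw [hBdef, Real.inv_rpow hβ0.le, Real.rpow_neg hβ0.le, inv_inv]
    have hββ : β * β⁻¹ = 1 := mul_inv_cancel₀ hβ0.ne'
    simp only [mm]
    rcases lt_or_ge B (W₂ ^ (-α)) with h1 | h1
    · -- 1/β lies strictly above W₂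
      have hzW2 : W₂ < β⁻¹ := by
        by_contra hcon; push_neg at hcon
        have h := orm_rpow_anti hα (by positivity : (0:ℝ) < β⁻¹) hcon
        rw [hβB] at h; linarith
      have hmem : muT α β p W₁ W₂ β⁻¹ - (β⁻¹:ℝ) ^ (-α)
          = (1 - p) * (1 - B) + p * (W₁ ^ (-α) - W₂ ^ (-α)) := by
        rw [muT, if_neg (not_lt.mpr (hW12.trans hzW2).le), if_neg (not_le.mpr hzW2), hβB,
          hββ, max_eq_right hW1]
        simp only [Fbar, Real.one_rpow, min_self]
        rw [max_eq_right (by linarith : (0:ℝ) ≤ W₁ ^ (-α) - W₂ ^ (-α))]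
        ring
      have hle : muT α β p W₁ W₂ β⁻¹ - (β⁻¹:ℝ) ^ (-α)
          ≤ sSup ((fun z => muT α β p W₁ W₂ z - z ^ (-α)) '' Ici (1:ℝ)) :=
        le_csSup hbdd ⟨β⁻¹, hβinv1, rfl⟩
      rw [hmem] at hle
      nlinarith [mul_pos hc0 hs, mul_nonneg hp0.le
        (by linarith : (0:ℝ) ≤ W₁ ^ (-α) - W₂ ^ (-α))]
    rcases lt_or_ge (W₁ ^ (-α)) B with h2 | h2
    · -- 1/β lies strictly below W₁
      have hzW1 : β⁻¹ < W₁ := by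
        by_contra hcon; push_neg at hcon
        have h := orm_rpow_anti hα hW10 hcon
        rw [hβB] at h; linarith
      have hmem : muT α β p W₁ W₂ β⁻¹ - (β⁻¹:ℝ) ^ (-α) = (1 - p) * (1 - B) := by
        rw [muT, if_pos hzW1, hβB, hββ]
        simp only [Fbar, Real.one_rpow, min_self]
        ring
      have hle : muT α β p W₁ W₂ β⁻¹ - (β⁻¹:ℝ) ^ (-α)
          ≤ sSup ((fun z => muT α β p W₁ W₂ z - z ^ (-α)) '' Ici (1:ℝ)) :=
        le_csSup hbdd ⟨β⁻¹, hβinv1, rfl⟩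
      rw [hmem] at hle
      nlinarith [mul_pos hc0 hs]
    · -- W₂ ^ (-α) ≤ B ≤ W₁ ^ (-α)
      have hEB : (β * W₂) ^ (-α) * B = W₂ ^ (-α) := by
        rw [hBdef, Real.mul_rpow hβ0.le hW20.le, mul_comm (β ^ (-α)) (W₂ ^ (-α)),
          mul_assoc, ← Real.rpow_add hβ0, neg_add_cancel, Real.rpow_zero, mul_one]
      have hE0 : 0 ≤ (β * W₂) ^ (-α) := Real.rpow_nonneg (by positivity) _
      have hE1 : (β * W₂) ^ (-α) ≤ 1 := by
        have h : (β * W₂) ^ (-α) * B ≤ 1 * B := by rw [hEB, one_mul]; exact h1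
        exact le_of_mul_le_mul_right h hB0
      have hED : W₂ ^ (-α) ≤ (β * W₂) ^ (-α) := by
        nlinarith [mul_le_mul_of_nonneg_left hB1.le hE0]
      have hFb2 : Fbar α (β * W₂) = (β * W₂) ^ (-α) := min_eq_right hE1
      have hRval := orm_right_limit α β p W₁ W₂ hα hβ0 hW1 hW12 hbdd
      rw [hFb2] at hRval
      have hleft : (1 - p - c) * (1 - B) + p * c ≤ (1 - p) * (1 - W₁ ^ (-α)) →
          (1 - p - c) * (1 - B) + p * c
            ≤ sSup ((fun z => muT α β p W₁ W₂ z - z ^ (-α)) '' Ici (1:ℝ)) := by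
        intro hcase
        have hA1' : W₁ ^ (-α) < 1 := by
          by_contra hA; push_neg at hA
          nlinarith [mul_nonneg hq.le (sub_nonneg.mpr hA)]
        have hW11 : 1 < W₁ := by
          rcases lt_or_eq_of_le hW1 with h | h
          · exact h
          · exfalso; rw [← h, Real.one_rpow] at hA1'; exact lt_irrefl 1 hA1'
        have hLval := orm_left_limit α β p W₁ W₂ hα hβ0 hW11 hbdd
        have hAB : (β * W₁) ^ (-α) * B = W₁ ^ (-α) := by
          rw [hBdef, Real.mul_rpow hβ0.le hW10.le, mul_comm (β ^ (-α)) (W₁ ^ (-α)),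
            mul_assoc, ← Real.rpow_add hβ0, neg_add_cancel, Real.rpow_zero, mul_one]
        have hE1' : 1 ≤ (β * W₁) ^ (-α) := by
          have h : 1 * B ≤ (β * W₁) ^ (-α) * B := by rw [hAB, one_mul]; exact h2
          exact le_of_mul_le_mul_right h hB0
        have hFb1 : Fbar α (β * W₁) = 1 := min_eq_left hE1'
        rw [hFb1] at hLval
        linarith [hLval, hcase]
      rcases le_total (β * W₂) W₁ with hsub | hsub
      · rw [max_eq_right hsub,
          max_eq_right (by linarith : (0:ℝ) ≤ W₁ ^ (-α) - W₂ ^ (-α))] at hRval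
        have hmax := orm_alg_i (p := p) (B := B) (c := c) (A := W₁ ^ (-α))
          (D := W₂ ^ (-α)) (E := (β * W₂) ^ (-α)) hq hB0 hB1 hs hWc hEB
        rcases le_max_iff.mp hmax with hcase | hcase
        · exact hleft hcase
        · linarith [hRval, hcase]
      · rw [max_eq_left hsub,
          max_eq_right (by linarith : (0:ℝ) ≤ (β * W₂) ^ (-α) - W₂ ^ (-α))] at hRval
        have hmax := orm_alg_ii (p := p) (B := B) (c := c) (A := W₁ ^ (-α))
          (D := W₂ ^ (-α)) (E := (β * W₂) ^ (-α)) hq hp0 hB0 hB1 hWc hcb hEB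
        rcases le_max_iff.mp hmax with hcase | hcase
        · exact hleft hcase
        · linarith [hRval, hcase]
  -- optimal interval data
  set b := (1 - p - c) * B / (1 - p) with hbdef
  have hbmul : b * (1 - p) = (1 - p - c) * B := by
    rw [hbdef]; field_simp
  have hb0 : 0 < b := by
    rw [hbdef]; exact div_pos (mul_pos (by linarith) hB0) hq
  have hbB : b < B := by
    by_contra hcon; push_neg at hcon
    nlinarith [mul_le_mul_of_nonneg_right hcon hq.le, mul_pos hc0 hB0]
  set a := b + c with hadef
  have ha0 : 0 < a := by rw [hadef]; linarith
  have ha1 : a < 1 := by rw [hadef]; linarith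
  set Z1 := a ^ (-1 / α) with hZ1def
  set Z2 := b ^ (-1 / α) with hZ2def
  have hZ1a : Z1 ^ (-α) = a := by rw [hZ1def]; exact orm_rpow_inv_neg hα ha0
  have hZ2b : Z2 ^ (-α) = b := by rw [hZ2def]; exact orm_rpow_inv_neg hα hb0
  have hZ11 : 1 ≤ Z1 := by
    rw [hZ1def]
    exact Real.one_le_rpow_of_pos_of_le_one_of_nonpos ha0 ha1.le hαexp
  have hZ12 : Z1 < Z2 := by
    rw [hZ1def, hZ2def]
    exact Real.rpow_lt_rpow_of_neg hb0 (by rw [hadef]; linarith)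
      (div_neg_of_neg_of_pos (by norm_num) hα)
  have hfeas : Z1 ^ (-α) - Z2 ^ (-α) ≤ c := by
    rw [hZ1a, hZ2b, hadef]; linarith
  have hupper : mm α β p Z1 Z2 ≤ (1 - p - c) * (1 - B) + p * c := by
    simp only [mm]
    apply csSup_le ⟨_, mem_image_of_mem _ (self_mem_Ici : (1:ℝ) ∈ Ici 1)⟩
    rintro x ⟨z, hz, rfl⟩
    have hz1 : (1:ℝ) ≤ z := hz
    have hz0 : (0:ℝ) < z := by linarith
    have hu0 : 0 < z ^ (-α) := Real.rpow_pos_of_pos hz0 _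
    simp only [muT]
    split_ifs with hlt hle
    · have hua : a ≤ z ^ (-α) := by
        have h := orm_rpow_anti hα hz0 hlt.le
        rwa [hZ1a] at h
      have hF : Fbar α (β * z) ≤ 1 := min_le_left _ _
      have hF0 : 0 ≤ Fbar α (β * z) := le_min one_pos.le (Real.rpow_nonneg (by positivity) _)
      have hVa : (1 - p) * (1 - a) = (1 - p - c) * (1 - B) + p * c := by
        rw [hadef, hbdef]; field_simp; ring
      linarith [mul_le_mul_of_nonneg_left hF hq.le, mul_le_mul_of_nonneg_left hua hq.le]
    · have hZ20 : (0:ℝ) < Z2 := by linarith [hZ11, hZ12]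
      have hM : (max (z / β) Z2) ^ (-α) ≤ Z2 ^ (-α) :=
        orm_rpow_anti hα hZ20 (le_max_right _ _)
      linarith [mul_le_mul_of_nonneg_left hM hp0.le, hG0]
    · push_neg at hle
      have hub : z ^ (-α) ≤ b := by
        have h := orm_rpow_anti hα (by linarith [hZ11, hZ12] : (0:ℝ) < Z2) hle.le
        rwa [hZ2b] at h
      have hMx : (max (β * z) Z1) ^ (-α) ≤ a := by
        have h := orm_rpow_anti hα (by linarith [hZ11] : (0:ℝ) < Z1) (le_max_right (β * z) Z1)
        rwa [hZ1a] at h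
      have hmaxc : max 0 ((max (β * z) Z1) ^ (-α) - Z2 ^ (-α)) ≤ c := by
        apply max_le hc0.le
        rw [hZ2b]
        have h : a = b + c := hadef
        linarith [hMx]
      have hfb : Fbar α (β * z) ≤ B⁻¹ * z ^ (-α) := by
        refine le_trans (min_le_right _ _) (le_of_eq ?_)
        rw [hBdef, Real.mul_rpow hβ0.le hz0.le, Real.rpow_neg hβ0.le]
      have hBi : 1 ≤ B⁻¹ := by
        have h := inv_anti₀ hB0 hB1.le; simpa using h
      have hcoef : 0 ≤ (1 - p) * B⁻¹ + p - 1 := by nlinarith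
      have hVb : (1 - p) * B⁻¹ * b + p * b + p * c - b = (1 - p - c) * (1 - B) + p * c := by
        rw [hbdef]; field_simp; ring
      linarith [mul_le_mul_of_nonneg_left hfb hq.le,
        mul_le_mul_of_nonneg_right hub hcoef,
        mul_le_mul_of_nonneg_left hmaxc hp0.le, hVb]
  refine ⟨hZ11, hZ12, ?_, ?_, key⟩
  · rw [hZ1a, hZ2b, hadef]; ring
  · exact le_antisymm hupper (key Z1 Z2 hZ11 hZ12 hfeas)
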